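/- Let P be a finite nonempty set of points in ℝ² such that ‖p − q‖ ≥ 1 for all distinct p, q ∈ P. Then there exists a point p ∈ P such that at most 3 points q ∈ P satisfy ‖p − q‖ = 1. Consequently, the minimum degree of a nonempty penny graph is at most 3. -/

import Mathlib

open Real Complex

/-- floors equal implies difference less than 1 -/
lemma pg_abs_sub_lt_one {x y : ℝ} (h : ⌊x⌋ = ⌊y⌋) : |x - y| < 1 := by
  have hx1 := Int.floor_le x
  have hx2 := Int.lt_floor_add_one x
  have hy1 := Int.floor_le y
  have hy2 := Int.lt_floor_add_one y
  rw [h] at hx1 hx2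
  rw [abs_sub_lt_iff]
  constructor <;> linarith

/-- Two unit complex numbers with args in [0, π) at distance ≥ 1 have
different angular buckets. -/
lemma pg_bucket_ne {z w : ℂ} (hz : ‖z‖ = 1) (hw : ‖w‖ = 1)
    (hz0 : 0 ≤ z.arg) (hzπ : z.arg < π) (hw0 : 0 ≤ w.arg) (hwπ : w.arg < π)
    (hd : 1 ≤ ‖z - w‖) :
    ⌊3 * z.arg / π⌋ ≠ ⌊3 * w.arg / π⌋ := by
  have hπ : (0:ℝ) < π := Real.pi_pos
  intro hfl
  have hzne : z ≠ 0 := by intro h; simp [h] at hz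
  have hwne : w ≠ 0 := by intro h; simp [h] at hw
  -- inner product bound
  have hns : Complex.normSq (z - w) = Complex.normSq z + Complex.normSq w
      - 2 * (z.re * w.re + z.im * w.im) := by
    simp [Complex.normSq_apply, Complex.sub_re, Complex.sub_im]; ring
  have hnz : Complex.normSq z = 1 := by rw [← Complex.sq_norm, hz]; norm_num
  have hnw : Complex.normSq w = 1 := by rw [← Complex.sq_norm, hw]; norm_num
  have h1 : (1:ℝ) ≤ Complex.normSq (z - w) := by
    rw [← Complex.sq_norm]; nlinarith
  have hip : z.re * w.re + z.im * w.im ≤ 1 / 2 := by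
    rw [hns, hnz, hnw] at h1; linarith
  -- express via cos
  have hcz : Real.cos z.arg = z.re := by rw [Complex.cos_arg hzne, hz, div_one]
  have hsz : Real.sin z.arg = z.im := by rw [Complex.sin_arg, hz, div_one]
  have hcw : Real.cos w.arg = w.re := by rw [Complex.cos_arg hwne, hw, div_one]
  have hsw : Real.sin w.arg = w.im := by rw [Complex.sin_arg, hw, div_one]
  have hcos : Real.cos (z.arg - w.arg) ≤ 1 / 2 := by
    rw [Real.cos_sub, hcz, hsz, hcw, hsw]; linarith
  -- floors equal ⇒ angle difference < π/3
  have hlt : |z.arg - w.arg| < π / 3 := by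
    have := pg_abs_sub_lt_one hfl
    have h3 : |3 * z.arg / π - 3 * w.arg / π| = |z.arg - w.arg| * (3 / π) := by
      rw [← abs_of_pos (show (0:ℝ) < 3 / π by positivity), ← abs_mul]
      ring_nf
    rw [h3] at this
    calc |z.arg - w.arg| = |z.arg - w.arg| * (3 / π) * (π / 3) := by
          field_simp
      _ < 1 * (π / 3) := by
          apply mul_lt_mul_of_pos_right this (by positivity)
      _ = π / 3 := by ring
  have hc2 : Real.cos (π / 3) < Real.cos |z.arg - w.arg| :=
    Real.cos_lt_cos_of_nonneg_of_le_pi (abs_nonneg _) (by linarith) hlt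
  rw [Real.cos_abs, Real.cos_pi_div_three] at hc2
  linarith

/-- Map a point of the plane to a complex number. -/
noncomputable def pgZ (v : EuclideanSpace ℝ (Fin 2)) : ℂ := ⟨v 0, v 1⟩

lemma pgZ_abs (v : EuclideanSpace ℝ (Fin 2)) : ‖pgZ v‖ = ‖v‖ := by
  rw [EuclideanSpace.norm_eq, Complex.norm_def, Complex.normSq_apply]
  simp [pgZ, Fin.sum_univ_two, Real.norm_eq_abs, sq_abs]
  ring_nf

lemma pgZ_sub (v w : EuclideanSpace ℝ (Fin 2)) : pgZ v - pgZ w = pgZ (v - w) := by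
  apply Complex.ext <;> simp [pgZ]

/-- In any finite nonempty set of points in `ℝ²` with pairwise distances at least 1,
some point has at most 3 points at distance exactly 1 from it. Consequently the minimum
degree of a nonempty penny graph is at most 3. -/
theorem penny_min_degree (P : Finset (EuclideanSpace ℝ (Fin 2))) (hP : P.Nonempty)
    (h : ∀ p ∈ P, ∀ q ∈ P, p ≠ q → 1 ≤ ‖p - q‖) :
    ∃ p ∈ P, {q ∈ (P : Set (EuclideanSpace ℝ (Fin 2))) | ‖p - q‖ = 1}.ncard ≤ 3 := by
  have hπ : (0:ℝ) < π := Real.pi_pos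
  -- take p lexicographically minimal in (y, x)
  obtain ⟨p, hpP, hmin⟩ := P.exists_min_image (fun v => toLex (v 1, v 0)) hP
  refine ⟨p, hpP, ?_⟩
  set S : Set (EuclideanSpace ℝ (Fin 2)) :=
    {q ∈ (P : Set (EuclideanSpace ℝ (Fin 2))) | ‖p - q‖ = 1} with hS
  -- basic facts about members of S
  have hmem : ∀ q ∈ S, q ∈ P ∧ q ≠ p ∧ ‖p - q‖ = 1 := by
    intro q hq
    obtain ⟨hqP, hq1⟩ := hq
    refine ⟨hqP, ?_, hq1⟩
    intro he; rw [he] at hq1; simp at hq1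
  -- lex strict inequality for q ≠ p in P
  have hlex : ∀ q ∈ P, q ≠ p → p 1 < q 1 ∨ (p 1 = q 1 ∧ p 0 < q 0) := by
    intro q hqP hne
    have hle := hmin q hqP
    have hne' : toLex ((p 1 : ℝ), (p 0 : ℝ)) ≠ toLex (q 1, q 0) := by
      intro he
      apply hne
      have h1 : p 1 = q 1 ∧ p 0 = q 0 := by
        constructor
        · exact congrArg (fun x => (ofLex x).1) he
        · exact congrArg (fun x => (ofLex x).2) he
      ext i
      fin_cases i
      · exact h1.2.symm
      · exact h1.1.symm
    have hlt : toLex ((p 1 : ℝ), (p 0 : ℝ)) < toLex (q 1, q 0) := lt_of_le_of_ne hle hne'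
    rw [Prod.Lex.lt_iff] at hlt
    exact hlt
  -- the arg of pgZ (q - p) lies in [0, π) for q ∈ S
  have hz : ∀ q ∈ S, ‖pgZ (q - p)‖ = 1 ∧
      0 ≤ (pgZ (q - p)).arg ∧ (pgZ (q - p)).arg < π := by
    intro q hq
    obtain ⟨hqP, hne, hdist⟩ := hmem q hq
    have habs : ‖pgZ (q - p)‖ = 1 := by
      rw [pgZ_abs, ← norm_neg, neg_sub, hdist]
    have him : 0 ≤ (pgZ (q - p)).im := by
      have := hlex q hqP hne
      have h2 : (pgZ (q - p)).im = q 1 - p 1 := by simp [pgZ]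
      rw [h2]
      rcases this with h' | ⟨h', _⟩ <;> linarith
    refine ⟨habs, Complex.arg_nonneg_iff.mpr him, ?_⟩
    rcases lt_or_eq_of_le (Complex.arg_le_pi (pgZ (q - p))) with h' | h'
    · exact h'
    · exfalso
      obtain ⟨hre, him0⟩ := Complex.arg_eq_pi_iff.mp h'
      have h2 : (pgZ (q - p)).im = q 1 - p 1 := by simp [pgZ]
      have h3 : (pgZ (q - p)).re = q 0 - p 0 := by simp [pgZ]
      rw [h2] at him0
      rw [h3] at hre
      rcases hlex q hqP hne with h' | ⟨h', h''⟩ <;> linarith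
  -- bucket map is injective on S
  have key : Set.InjOn (fun q => ⌊3 * (pgZ (q - p)).arg / π⌋) S := by
    intro q hq r hr he
    by_contra hne
    obtain ⟨hq1, hq2, hq3⟩ := hz q hq
    obtain ⟨hr1, hr2, hr3⟩ := hz r hr
    have hqr : 1 ≤ ‖q - r‖ := h q (hmem q hq).1 r (hmem r hr).1 hne
    have hd : 1 ≤ ‖pgZ (q - p) - pgZ (r - p)‖ := by
      rw [pgZ_sub]
      have : q - p - (r - p) = q - r := by abel
      rw [this, pgZ_abs]
      exact hqr
    exact pg_bucket_ne hq1 hr1 hq2 hq3 hr2 hr3 hd he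
  -- bucket lands in {0, 1, 2}
  have hmaps : ∀ q ∈ S, (⌊3 * (pgZ (q - p)).arg / π⌋ : ℤ) ∈ ({0, 1, 2} : Set ℤ) := by
    intro q hq
    obtain ⟨_, h0, h1⟩ := hz q hq
    have hlb : (0:ℤ) ≤ ⌊3 * (pgZ (q - p)).arg / π⌋ := by
      apply Int.floor_nonneg.mpr; positivity
    have hub : ⌊3 * (pgZ (q - p)).arg / π⌋ < 3 := by
      apply Int.floor_lt.mpr
      push_cast
      rw [div_lt_iff₀ hπ]
      linarith
    simp only [Set.mem_insert_iff, Set.mem_singleton_iff]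
    omega
  have h3 : ({0, 1, 2} : Set ℤ).ncard = 3 := by
    rw [show ({0, 1, 2} : Set ℤ) = ↑({0, 1, 2} : Finset ℤ) by simp,
      Set.ncard_coe_finset]
    decide
  calc S.ncard ≤ ({0, 1, 2} : Set ℤ).ncard :=
        Set.ncard_le_ncard_of_injOn _ hmaps key (Set.toFinite _)
    _ = 3 := h3
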